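/- Let Σ be a set of pairs of words over ℕ in which every pair is balanced, and let Λ be the fully invariant congruence generated by Σ. Then every Λ-class is a finite set. -/

import Mathlib

/-- The fully invariant congruence on `FreeSemigroup ℕ` generated by a set `E` of pairs
of words: the congruence generated by all pairs `(φ u, φ v)` with `(u, v) ∈ E` and `φ` a
semigroup endomorphism of `FreeSemigroup ℕ`. -/
def ficCongruence (E : Set (FreeSemigroup ℕ × FreeSemigroup ℕ)) : Con (FreeSemigroup ℕ) :=
  conGen (fun a b => ∃ p ∈ E, ∃ φ : FreeSemigroup ℕ →ₙ* FreeSemigroup ℕ,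
    a = φ p.1 ∧ b = φ p.2)

/-- The list of letters of a word in the free semigroup on `ℕ`. -/
def wordLetters (u : FreeSemigroup ℕ) : List ℕ := u.head :: u.tail

/-- A pair of words over `ℕ` is balanced if every letter occurs the same number of times
in both components. -/
def BalancedPair (p : FreeSemigroup ℕ × FreeSemigroup ℕ) : Prop :=
  ∀ x : ℕ, (wordLetters p.1).count x = (wordLetters p.2).count x

/-- The multiset of letters of a word. -/
def mlet (u : FreeSemigroup ℕ) : Multiset ℕ := (wordLetters u : List ℕ)

lemma wordLetters_mul (a b : FreeSemigroup ℕ) :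
    wordLetters (a * b) = wordLetters a ++ wordLetters b := by
  simp [wordLetters, FreeSemigroup.head_mul, FreeSemigroup.tail_mul]

lemma mlet_mul (a b : FreeSemigroup ℕ) : mlet (a * b) = mlet a + mlet b := by
  simp [mlet, wordLetters_mul]

lemma mlet_hom (φ : FreeSemigroup ℕ →ₙ* FreeSemigroup ℕ) (w : FreeSemigroup ℕ) :
    mlet (φ w) = (mlet w).bind (fun x => mlet (φ (FreeSemigroup.of x))) := by
  induction w using FreeSemigroup.recOnMul with
  | ih1 x => simp [mlet, wordLetters, FreeSemigroup.of]
  | ih2 a b ha hb => simp [map_mul, mlet_mul, ha, hb, Multiset.add_bind]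

/-- The congruence "having the same multiset of letters". -/
def mletCon : Con (FreeSemigroup ℕ) where
  r a b := mlet a = mlet b
  iseqv := ⟨fun _ => rfl, Eq.symm, Eq.trans⟩
  mul' h1 h2 := by simp only [mlet_mul]; exact congrArg₂ _ h1 h2

lemma wordLetters_injective : Function.Injective wordLetters := by
  intro a b h
  cases a; cases b
  simp only [wordLetters, List.cons.injEq] at h
  simp [h.1, h.2]

/-- If every pair in `E` is balanced, then every class of the fully invariant congruence
generated by `E` is a finite set. -/
theorem ficCongruence_classes_finite
    (E : Set (FreeSemigroup ℕ × FreeSemigroup ℕ)) (hE : ∀ p ∈ E, BalancedPair p)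
    (u : FreeSemigroup ℕ) :
    {v : FreeSemigroup ℕ | ficCongruence E u v}.Finite := by
  have hle : ficCongruence E ≤ mletCon := by
    apply Con.conGen_le.mpr
    rintro a b ⟨p, hp, φ, rfl, rfl⟩
    show mlet (φ p.1) = mlet (φ p.2)
    have h12 : mlet p.1 = mlet p.2 := by
      exact Multiset.coe_eq_coe.mpr (List.perm_iff_count.mpr (hE p hp))
    rw [mlet_hom, mlet_hom, h12]
  have hsub : {v : FreeSemigroup ℕ | ficCongruence E u v} ⊆
      wordLetters ⁻¹' {l : List ℕ | l.Perm (wordLetters u)} := by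
    intro v hv
    have : mlet u = mlet v := hle hv
    exact (Multiset.coe_eq_coe.mp this.symm)
  apply Set.Finite.subset _ hsub
  apply Set.Finite.preimage (Function.Injective.injOn wordLetters_injective)
  apply Set.Finite.subset (List.finite_toSet (wordLetters u).permutations)
  intro l hl
  exact List.mem_permutations.mpr hl
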